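/- Let B ⊆ ℝ^d be compact with Vol(B) > 0 and f : B → ℝ bounded measurable with maximum M attained at x* ∈ B. Suppose for ζ > 0 the set A_ζ = {x ∈ B : f(x) ≥ M − ζ} satisfies Vol(A_ζ) ≥ min{ε^d, (ζ/G)^d} with Vol(B) = (2ε)^d. Then for β > 0, the soft-max gap M − β log((1/Vol(B))∫_B e^{f/β}) is at most ζ + βd·max{log 2, log(2εG/ζ)}. -/

import Mathlib

open MeasureTheory

theorem stmt18 {d : ℕ} (hd : 1 ≤ d) (B : Set (Fin d → ℝ)) (hB : IsCompact B)
    (ε G β ζ : ℝ) (hε : 0 < ε) (hG : 0 < G) (hβ : 0 < β) (hζ : 0 < ζ)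
    (hvolB : volume B = ENNReal.ofReal ((2 * ε) ^ d))
    (f : (Fin d → ℝ) → ℝ) (hf : Measurable f) (C : ℝ) (hbd : ∀ x ∈ B, |f x| ≤ C)
    (M : ℝ) (xstar : Fin d → ℝ) (hxstar : xstar ∈ B) (hMx : f xstar = M)
    (hM : ∀ x ∈ B, f x ≤ M)
    (hA : ENNReal.ofReal (min (ε ^ d) ((ζ / G) ^ d))
        ≤ volume {x | x ∈ B ∧ M - ζ ≤ f x}) :
    M - β * Real.log ((volume B).toReal⁻¹ * ∫ x in B, Real.exp (f x / β))
      ≤ ζ + β * d * max (Real.log 2) (Real.log (2 * ε * G / ζ)) := by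
  set A : Set (Fin d → ℝ) := {x | x ∈ B ∧ M - ζ ≤ f x} with hAdef
  have hBmeas : MeasurableSet B := hB.isClosed.measurableSet
  have hAmeas : MeasurableSet A := by
    have : A = B ∩ f ⁻¹' (Set.Ici (M - ζ)) := rfl
    rw [this]; exact hBmeas.inter (hf measurableSet_Ici)
  have hAB : A ⊆ B := fun x hx => hx.1
  have hBfin : volume B ≠ ⊤ := by rw [hvolB]; exact ENNReal.ofReal_ne_top
  have hAfin : volume A ≠ ⊤ := fun h => hBfin (top_le_iff.mp (h ▸ measure_mono hAB))
  set a : ℝ := min (ε ^ d) ((ζ / G) ^ d) with hadef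
  have ha : 0 < a := lt_min (pow_pos hε d) (pow_pos (div_pos hζ hG) d)
  have hv : (0:ℝ) < (2 * ε) ^ d := pow_pos (by linarith) d
  have hvB : (volume B).toReal = (2 * ε) ^ d := by
    rw [hvolB, ENNReal.toReal_ofReal hv.le]
  -- integrability
  have hint : IntegrableOn (fun x => Real.exp (f x / β)) B volume := by
    apply Measure.integrableOn_of_bounded (M := Real.exp (C / β)) hBfin
      ((hf.div_const β).exp.aestronglyMeasurable)
    filter_upwards [ae_restrict_mem hBmeas] with x hx
    rw [Real.norm_eq_abs, abs_of_pos (Real.exp_pos _)]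
    exact Real.exp_le_exp.mpr (by
      have := le_trans (le_abs_self _) (hbd x hx); gcongr)
  have hintA : IntegrableOn (fun x => Real.exp (f x / β)) A volume :=
    hint.mono_set hAB
  -- lower bound on toReal of vol A
  have haA : a ≤ (volume A).toReal := by
    have := ENNReal.toReal_mono hAfin hA
    rwa [ENNReal.toReal_ofReal ha.le] at this
  -- integral lower bound
  have hlow : a * Real.exp ((M - ζ) / β) ≤ ∫ x in B, Real.exp (f x / β) := by
    have h1 : Real.exp ((M - ζ) / β) * (volume A).toReal
        ≤ ∫ x in A, Real.exp (f x / β) := by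
      apply setIntegral_ge_of_const_le_real hAmeas hAfin
      · intro x hx
        exact Real.exp_le_exp.mpr (by have := hx.2; gcongr)
      · exact hintA
    have h2 : (∫ x in A, Real.exp (f x / β)) ≤ ∫ x in B, Real.exp (f x / β) := by
      apply setIntegral_mono_set hint
      · filter_upwards with x using (Real.exp_pos _).le
      · exact Filter.Eventually.of_forall hAB
    calc a * Real.exp ((M - ζ) / β)
        ≤ Real.exp ((M - ζ) / β) * (volume A).toReal := by
          rw [mul_comm]
          exact mul_le_mul_of_nonneg_left haA (Real.exp_pos _).le
      _ ≤ ∫ x in A, Real.exp (f x / β) := h1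
      _ ≤ ∫ x in B, Real.exp (f x / β) := h2
  have hIpos : 0 < ∫ x in B, Real.exp (f x / β) :=
    lt_of_lt_of_le (mul_pos ha (Real.exp_pos _)) hlow
  -- log lower bound
  have hlog : Real.log a - Real.log ((2*ε)^d) + (M - ζ) / β
      ≤ Real.log ((volume B).toReal⁻¹ * ∫ x in B, Real.exp (f x / β)) := by
    have h3 : ((2*ε)^d)⁻¹ * (a * Real.exp ((M - ζ) / β))
        ≤ (volume B).toReal⁻¹ * ∫ x in B, Real.exp (f x / β) := by
      rw [hvB]
      exact mul_le_mul_of_nonneg_left hlow (inv_nonneg.mpr hv.le)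
    have h4 := Real.log_le_log (by positivity) h3
    rw [Real.log_mul (by positivity) (by positivity),
      Real.log_mul (by positivity) (Real.exp_pos _).ne',
      Real.log_inv, Real.log_exp] at h4
    linarith
  -- final key inequality on volumes
  have hkey : Real.log ((2*ε)^d) - Real.log a
      ≤ d * max (Real.log 2) (Real.log (2 * ε * G / ζ)) := by
    have l2e : Real.log (2*ε) = Real.log 2 + Real.log ε :=
      Real.log_mul two_ne_zero hε.ne'
    rcases min_cases (ε ^ d) ((ζ / G) ^ d) with ⟨h, _⟩ | ⟨h, _⟩ <;>
      rw [hadef, h, Real.log_pow, Real.log_pow]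
    · have : Real.log (2*ε) - Real.log ε = Real.log 2 := by rw [l2e]; ring
      calc (d:ℝ) * Real.log (2*ε) - d * Real.log ε
          = d * Real.log 2 := by rw [← this]; ring
        _ ≤ d * max (Real.log 2) (Real.log (2 * ε * G / ζ)) := by
            apply mul_le_mul_of_nonneg_left (le_max_left _ _) (Nat.cast_nonneg d)
    · have hq : Real.log (2*ε) - Real.log (ζ / G) = Real.log (2 * ε * G / ζ) := by
        rw [Real.log_div hζ.ne' hG.ne', Real.log_div (by positivity) hζ.ne',
          Real.log_mul (by positivity) hG.ne', l2e]; ring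
      calc (d:ℝ) * Real.log (2*ε) - d * Real.log (ζ/G)
          = d * Real.log (2 * ε * G / ζ) := by rw [← hq]; ring
        _ ≤ d * max (Real.log 2) (Real.log (2 * ε * G / ζ)) := by
            apply mul_le_mul_of_nonneg_left (le_max_right _ _) (Nat.cast_nonneg d)
  have := mul_le_mul_of_nonneg_left hlog hβ.le
  have hfin := mul_le_mul_of_nonneg_left hkey hβ.le
  have hβM : β * ((M - ζ) / β) = M - ζ := by field_simp
  nlinarith [hβ.le]
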